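/- For injective x and y on Fin n with n ≥ 2, τ(x,y,n) = 1 if and only if x and y induce the same strict order, i.e., for all i, j: x_i < x_j ↔ y_i < y_j. -/

import Mathlib

open scoped Classical

noncomputable def kendallTau (n : ℕ) (x y : Fin n → ℝ) : ℝ :=
  2 / ((n : ℝ) * ((n : ℝ) - 1)) *
    ∑ p ∈ Finset.univ.filter (fun p : Fin n × Fin n => p.1 < p.2),
      Real.sign (x p.1 - x p.2) * Real.sign (y p.1 - y p.2)

lemma sign_mul_sign_le_one (a b : ℝ) : Real.sign a * Real.sign b ≤ 1 := by
  rcases lt_trichotomy a 0 with h | h | h <;>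
  rcases lt_trichotomy b 0 with h' | h' | h' <;>
  simp [Real.sign_of_neg, Real.sign_of_pos, h, h', Real.sign_zero]

lemma sign_mul_sign_eq_one_iff {a b : ℝ} (ha : a ≠ 0) (hb : b ≠ 0) :
    Real.sign a * Real.sign b = 1 ↔ (a < 0 ↔ b < 0) := by
  rcases ha.lt_or_gt with h | h <;> rcases hb.lt_or_gt with h' | h' <;>
  simp [Real.sign_of_neg, Real.sign_of_pos, h, h', asymm h, asymm h'] <;> norm_num

lemma card_lt_pairs (n : ℕ) :
    2 * (Finset.univ.filter (fun p : Fin n × Fin n => p.1 < p.2)).card = n * n - n := by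
  classical
  have hbij : (Finset.univ.filter (fun p : Fin n × Fin n => p.1 < p.2)).card
      = (Finset.univ.filter (fun p : Fin n × Fin n => p.2 < p.1)).card := by
    apply Finset.card_bij (fun p _ => Prod.swap p)
    · intro p hp; simp_all [Finset.mem_filter]
    · intro p hp q hq h; exact Prod.swap_injective h
    · intro p hp
      exact ⟨Prod.swap p, by simp_all [Finset.mem_filter], by simp⟩
  have hunion : (Finset.univ.filter (fun p : Fin n × Fin n => p.1 ≠ p.2))
      = (Finset.univ.filter (fun p : Fin n × Fin n => p.1 < p.2))
        ∪ (Finset.univ.filter (fun p : Fin n × Fin n => p.2 < p.1)) := by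
    rw [← Finset.filter_or]
    apply Finset.filter_congr
    intro p _
    constructor
    · intro h; exact h.lt_or_gt
    · intro h; rcases h with h | h; exact ne_of_lt h; exact (ne_of_lt h).symm
  have hdisj : Disjoint (Finset.univ.filter (fun p : Fin n × Fin n => p.1 < p.2))
      (Finset.univ.filter (fun p : Fin n × Fin n => p.2 < p.1)) := by
    rw [Finset.disjoint_filter]
    intro p _ h h'
    exact absurd h' (asymm h)
  have hoff : (Finset.univ.filter (fun p : Fin n × Fin n => p.1 ≠ p.2)).card = n * n - n := by
    have : (Finset.univ : Finset (Fin n)).offDiag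
        = Finset.univ.filter (fun p : Fin n × Fin n => p.1 ≠ p.2) := by
      ext p; simp [Finset.mem_offDiag]
    rw [← this, Finset.offDiag_card]
    simp
  rw [hunion, Finset.card_union_of_disjoint hdisj, ← hbij] at hoff
  omega

/-- For injective score vectors, Kendall's tau equals 1 iff the two rankings
induce the same strict order. -/
theorem kendallTau_eq_one_iff {n : ℕ} (hn : 2 ≤ n) (x y : Fin n → ℝ)
    (hx : Function.Injective x) (hy : Function.Injective y) :
    kendallTau n x y = 1 ↔ ∀ i j, x i < x j ↔ y i < y j := by
  classical
  set S := Finset.univ.filter (fun p : Fin n × Fin n => p.1 < p.2) with hS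
  have hcard : (S.card : ℝ) * 2 = (n : ℝ) * ((n : ℝ) - 1) := by
    have h := card_lt_pairs n
    have hn' : n ≤ n * n := Nat.le_mul_of_pos_left n (by omega)
    have : 2 * S.card = n * n - n := h
    have h2 : 2 * S.card + n = n * n := by omega
    have := congrArg (fun k : ℕ => (k : ℝ)) h2
    push_cast at this
    ring_nf
    ring_nf at this
    linarith
  have hne : (n : ℝ) * ((n : ℝ) - 1) ≠ 0 := by
    have h2 : (2 : ℝ) ≤ n := by exact_mod_cast hn
    have := mul_pos (by linarith : (0:ℝ) < n) (by linarith : (0:ℝ) < (n:ℝ) - 1)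
    linarith
  have hterm_ne : ∀ p ∈ S, x p.1 - x p.2 ≠ 0 ∧ y p.1 - y p.2 ≠ 0 := by
    intro p hp
    have hp' : p.1 < p.2 := (Finset.mem_filter.mp hp).2
    constructor
    · exact sub_ne_zero.mpr (fun h => absurd (hx h) (ne_of_lt hp'))
    · exact sub_ne_zero.mpr (fun h => absurd (hy h) (ne_of_lt hp'))
  constructor
  · intro h i j
    -- τ = 1 ⇒ sum = card S ⇒ every term = 1
    have hsum : ∑ p ∈ S, Real.sign (x p.1 - x p.2) * Real.sign (y p.1 - y p.2)
        = (S.card : ℝ) := by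
      unfold kendallTau at h
      rw [← hS] at h
      rw [div_mul_eq_mul_div, div_eq_iff hne] at h
      linarith [h, hcard]
    have hall : ∀ p ∈ S, Real.sign (x p.1 - x p.2) * Real.sign (y p.1 - y p.2) = 1 := by
      by_contra hc
      push_neg at hc
      obtain ⟨p, hp, hplt⟩ := hc
      have hle : Real.sign (x p.1 - x p.2) * Real.sign (y p.1 - y p.2) < 1 :=
        lt_of_le_of_ne (sign_mul_sign_le_one _ _) hplt
      have : ∑ p ∈ S, Real.sign (x p.1 - x p.2) * Real.sign (y p.1 - y p.2)
          < ∑ _p ∈ S, (1 : ℝ) :=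
        Finset.sum_lt_sum (fun q _ => sign_mul_sign_le_one _ _) ⟨p, hp, hle⟩
      rw [Finset.sum_const, nsmul_eq_mul, mul_one, hsum] at this
      exact lt_irrefl _ this
    have key : ∀ i j : Fin n, i < j → (x i < x j ↔ y i < y j) := by
      intro i j hij
      have hmem : (i, j) ∈ S := by simp [hS, hij]
      have h1 := hall (i, j) hmem
      obtain ⟨hxne, hyne⟩ := hterm_ne (i, j) hmem
      have := (sign_mul_sign_eq_one_iff hxne hyne).mp h1
      constructor
      · intro hlt; have : y i - y j < 0 := this.mp (by linarith); linarith
      · intro hlt; have : x i - x j < 0 := this.mpr (by linarith); linarith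
    rcases lt_trichotomy i j with hij | hij | hij
    · exact key i j hij
    · subst hij; simp
    · have := key j i hij
      have hxne : x i ≠ x j := fun h => (ne_of_gt hij) (hx h)
      have hyne : y i ≠ y j := fun h => (ne_of_gt hij) (hy h)
      constructor
      · intro hlt
        rcases hyne.lt_or_gt with h' | h'
        · exact h'
        · exact absurd (this.mpr h') (asymm hlt)
      · intro hlt
        rcases hxne.lt_or_gt with h' | h'
        · exact h'
        · exact absurd (this.mp h') (asymm hlt)
  · intro h
    have hall : ∀ p ∈ S, Real.sign (x p.1 - x p.2) * Real.sign (y p.1 - y p.2) = 1 := by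
      intro p hp
      obtain ⟨hxne, hyne⟩ := hterm_ne p hp
      rw [sign_mul_sign_eq_one_iff hxne hyne]
      constructor
      · intro h'; have := (h p.1 p.2).mp (by linarith); linarith
      · intro h'; have := (h p.1 p.2).mpr (by linarith); linarith
    unfold kendallTau
    rw [← hS, Finset.sum_congr rfl hall, Finset.sum_const, nsmul_eq_mul, mul_one]
    rw [div_mul_eq_mul_div, div_eq_iff hne]
    linarith [hcard]
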